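/- Let δ, γ > 0 be real numbers, let k_1, k_2 be non-negative integers, and let X ⊆ [0,δ]^{k_1} × [0,γ]^{k_2} ⊂ ℝ^{k_1 + k_2} be a finite set with |X| ≥ m for some integer m ≥ 2. Then there exist two distinct points p, q ∈ X such that |p - q|^2 ≤ (⌊m/2⌋·⌈m/2⌉ / C(m,2)) · (δ^2 k_1 + γ^2 k_2), where C(m,2) = m(m-1)/2. -/

import Mathlib

open Finset

private lemma key_nat (a b m : ℕ) (h : a + b = m) : a * b ≤ m / 2 * ((m + 1) / 2) := by
  obtain ⟨q, r, hr, rfl⟩ : ∃ q r, r < 2 ∧ m = 2 * q + r := ⟨m / 2, m % 2, by omega, by omega⟩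
  have h1 : (2 * q + r) / 2 = q := by omega
  have h2 : (2 * q + r + 1) / 2 = q + r := by omega
  rw [h1, h2]
  interval_cases r
  · zify at h ⊢; nlinarith [sq_nonneg ((a : ℤ) - b)]
  · rcases (show a ≤ q ∨ b ≤ q by omega) with h' | h'
    · have hh : (0:ℤ) ≤ ((q:ℤ) - a) * ((q:ℤ) + 1 - a) :=
        mul_nonneg (by omega) (by omega)
      zify at h ⊢; nlinarith
    · have hh : (0:ℤ) ≤ ((q:ℤ) - b) * ((q:ℤ) + 1 - b) :=
        mul_nonneg (by omega) (by omega)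
      zify at h ⊢; nlinarith

private lemma swap_tri (m : ℕ) (g : ℕ → ℝ) :
    ∑ j ∈ range m, ∑ i ∈ range j, g i = ∑ i ∈ range m, ((m - 1 - i : ℕ) : ℝ) * g i := by
  induction m with
  | zero => simp
  | succ n ih =>
    rw [sum_range_succ, ih, sum_range_succ]
    have h1 : ((n + 1 - 1 - n : ℕ) : ℝ) = 0 := by norm_num
    rw [h1, zero_mul, add_zero, ← sum_add_distrib]
    refine sum_congr rfl fun i hi => ?_
    have hi' : i < n := mem_range.mp hi
    have h2 : ((n + 1 - 1 - i : ℕ) : ℝ) = ((n - 1 - i : ℕ) : ℝ) + 1 := by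
      have : n + 1 - 1 - i = (n - 1 - i) + 1 := by omega
      rw [this]; push_cast; ring
    rw [h2]; ring

private lemma max_sum (m : ℕ) :
    ∑ i ∈ range m, max ((2 * i + 1 : ℤ) - m) 0 = ((m / 2 * ((m + 1) / 2) : ℕ) : ℤ) := by
  induction m using Nat.strong_induction_on with
  | _ m ih =>
    match m with
    | 0 => simp
    | 1 => norm_num
    | (n + 2) =>
      have key := ih n (by omega)
      rw [show n + 2 = (n + 1) + 1 by rfl, Finset.sum_range_succ']
      have h0 : max ((2 * (0:ℕ) + 1 : ℤ) - ((n:ℕ) + 1 + 1 : ℕ)) 0 = 0 := by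
        rw [max_eq_right]; push_cast; omega
      rw [h0, add_zero]
      have h1 : ∀ i ∈ range (n + 1),
          max ((2 * (i + 1 : ℕ) + 1 : ℤ) - ((n:ℕ) + 1 + 1 : ℕ)) 0
            = max ((2 * i + 1 : ℤ) - n) 0 := by
        intro i _; congr 1; push_cast; ring
      rw [Finset.sum_congr rfl h1, sum_range_succ, key]
      have h2 : max ((2 * (n:ℤ) + 1) - n) 0 = (n : ℤ) + 1 := by
        rw [max_eq_left]; ring_nf; omega
      rw [h2]
      have h3 : (n + 2) / 2 * ((n + 2 + 1) / 2) = n / 2 * ((n + 1) / 2) + (n + 1) := by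
        have ha : (n + 2) / 2 = n / 2 + 1 := by omega
        have hb : (n + 2 + 1) / 2 = (n + 1) / 2 + 1 := by omega
        have hc : n / 2 + (n + 1) / 2 = n := by omega
        rw [ha, hb]
        calc (n / 2 + 1) * ((n + 1) / 2 + 1)
            = n / 2 * ((n + 1) / 2) + (n / 2 + (n + 1) / 2) + 1 := by ring
          _ = n / 2 * ((n + 1) / 2) + (n + 1) := by rw [hc]; ring
      rw [h3]; push_cast; ring

private lemma mono_bound (m : ℕ) (L : ℝ) (hL : 0 ≤ L) (a : ℕ → ℝ)
    (h0 : ∀ i < m, 0 ≤ a i) (h1 : ∀ i < m, a i ≤ L)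
    (hmono : ∀ i j, i ≤ j → j < m → a i ≤ a j) :
    ∑ j ∈ range m, ∑ i ∈ range j, (a j - a i) ^ 2
      ≤ ((m / 2 * ((m + 1) / 2) : ℕ) : ℝ) * L ^ 2 := by
  have step1 : ∑ j ∈ range m, ∑ i ∈ range j, (a j - a i) ^ 2
      ≤ L * ∑ j ∈ range m, ∑ i ∈ range j, (a j - a i) := by
    rw [Finset.mul_sum]
    refine sum_le_sum fun j hj => ?_
    rw [Finset.mul_sum]
    refine sum_le_sum fun i hi => ?_
    have hj' : j < m := mem_range.mp hj
    have hi' : i < j := mem_range.mp hi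
    have hd0 : 0 ≤ a j - a i := by
      have := hmono i j (le_of_lt hi') hj'; linarith
    have hdL : a j - a i ≤ L := by
      have := h0 i (lt_trans hi' hj'); have := h1 j hj'; linarith
    nlinarith
  have hT : ∑ j ∈ range m, ∑ i ∈ range j, (a j - a i)
      = ∑ i ∈ range m, ((i : ℝ) - ((m - 1 - i : ℕ) : ℝ)) * a i := by
    calc ∑ j ∈ range m, ∑ i ∈ range j, (a j - a i)
        = ∑ j ∈ range m, ((j : ℝ) * a j) - ∑ j ∈ range m, ∑ i ∈ range j, a i := by
          rw [← Finset.sum_sub_distrib]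
          refine sum_congr rfl fun j _ => ?_
          rw [Finset.sum_sub_distrib, Finset.sum_const, card_range, nsmul_eq_mul]
      _ = ∑ i ∈ range m, ((i : ℝ) * a i) - ∑ i ∈ range m, ((m - 1 - i : ℕ) : ℝ) * a i := by
          rw [swap_tri]
      _ = _ := by rw [← Finset.sum_sub_distrib]; exact sum_congr rfl fun i _ => by ring
  have hterm : ∀ i ∈ range m,
      ((i : ℝ) - ((m - 1 - i : ℕ) : ℝ)) * a i ≤ ((max ((2 * i + 1 : ℤ) - m) 0 : ℤ) : ℝ) * L := by
    intro i hi
    have hi' : i < m := mem_range.mp hi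
    have hc : ((i : ℝ) - ((m - 1 - i : ℕ) : ℝ)) = (((2 * i + 1 : ℤ) - m : ℤ) : ℝ) := by
      have : ((m - 1 - i : ℕ) : ℝ) = (m : ℝ) - 1 - i := by
        rw [Nat.cast_sub (by omega), Nat.cast_sub (by omega)]; norm_num
      rw [this]; push_cast; ring
    rw [hc]
    rcases le_or_gt ((2 * i + 1 : ℤ)) m with h | h
    · have hm0 : max ((2 * i + 1 : ℤ) - m) 0 = 0 := max_eq_right (by omega)
      rw [hm0]
      have hcn : (((2 * i + 1 : ℤ) - m : ℤ) : ℝ) ≤ 0 := by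
        have : ((2 * i + 1 : ℤ) - m : ℤ) ≤ 0 := by omega
        exact_mod_cast this
      simpa using mul_nonpos_of_nonpos_of_nonneg hcn (h0 i hi')
    · have hm0 : max ((2 * i + 1 : ℤ) - m) 0 = (2 * i + 1 : ℤ) - m := max_eq_left (by omega)
      rw [hm0]
      have hcn : (0 : ℝ) ≤ (((2 * i + 1 : ℤ) - m : ℤ) : ℝ) := by
        have : (0 : ℤ) ≤ (2 * i + 1 : ℤ) - m := by omega
        exact_mod_cast this
      exact mul_le_mul_of_nonneg_left (h1 i hi') hcn
  have hTle : ∑ j ∈ range m, ∑ i ∈ range j, (a j - a i)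
      ≤ ((m / 2 * ((m + 1) / 2) : ℕ) : ℝ) * L := by
    rw [hT]
    calc ∑ i ∈ range m, ((i : ℝ) - ((m - 1 - i : ℕ) : ℝ)) * a i
        ≤ ∑ i ∈ range m, ((max ((2 * i + 1 : ℤ) - m) 0 : ℤ) : ℝ) * L := sum_le_sum hterm
      _ = (((∑ i ∈ range m, max ((2 * i + 1 : ℤ) - m) 0 : ℤ)) : ℝ) * L := by
          rw [← Finset.sum_mul]; push_cast; ring
      _ = ((m / 2 * ((m + 1) / 2) : ℕ) : ℝ) * L := by rw [max_sum, Int.cast_natCast]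
  calc ∑ j ∈ range m, ∑ i ∈ range j, (a j - a i) ^ 2
      ≤ L * ∑ j ∈ range m, ∑ i ∈ range j, (a j - a i) := step1
    _ ≤ L * (((m / 2 * ((m + 1) / 2) : ℕ) : ℝ) * L) := mul_le_mul_of_nonneg_left hTle hL
    _ = ((m / 2 * ((m + 1) / 2) : ℕ) : ℝ) * L ^ 2 := by ring

private lemma double_tri (m : ℕ) (b : ℕ → ℝ) :
    ∑ i ∈ range m, ∑ j ∈ range m, (b i - b j) ^ 2
      = 2 * ∑ j ∈ range m, ∑ i ∈ range j, (b j - b i) ^ 2 := by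
  induction m with
  | zero => simp
  | succ n ih =>
    have hsymm : ∀ i, (b i - b n) ^ 2 = (b n - b i) ^ 2 := fun i => by ring
    simp only [sum_range_succ]
    rw [sum_add_distrib, ih]
    simp_rw [hsymm]
    ring

private lemma pair_sum_bound (m : ℕ) (L : ℝ) (hL : 0 ≤ L) (a : Fin m → ℝ)
    (hmem : ∀ i, a i ∈ Set.Icc 0 L) :
    ∑ i, ∑ j, (a i - a j) ^ 2 ≤ 2 * ((m / 2 * ((m + 1) / 2) : ℕ) : ℝ) * L ^ 2 := by
  set σ := Tuple.sort a with hσdef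
  have hmono := Tuple.monotone_sort a
  have hstep : ∑ i, ∑ j, (a i - a j) ^ 2 = ∑ i, ∑ j, (a (σ i) - a (σ j)) ^ 2 := by
    have inner : ∀ c : ℝ, ∑ j, (c - a (σ j)) ^ 2 = ∑ j, (c - a j) ^ 2 := fun c =>
      Equiv.sum_comp σ (fun j => (c - a j) ^ 2)
    calc ∑ i, ∑ j, (a i - a j) ^ 2
        = ∑ i, ∑ j, (a (σ i) - a j) ^ 2 :=
          (Equiv.sum_comp σ (fun i => ∑ j, (a i - a j) ^ 2)).symm
      _ = ∑ i, ∑ j, (a (σ i) - a (σ j)) ^ 2 := sum_congr rfl fun i _ => (inner _).symm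
  set b : ℕ → ℝ := fun t => if h : t < m then a (σ ⟨t, h⟩) else 0 with hbdef
  have hbi : ∀ i : Fin m, b (i : ℕ) = a (σ i) := by
    intro i; simp only [hbdef, i.isLt, dif_pos, Fin.eta]
  have hfin : ∑ i, ∑ j, (a (σ i) - a (σ j)) ^ 2
      = ∑ i ∈ range m, ∑ j ∈ range m, (b i - b j) ^ 2 := by
    rw [← Fin.sum_univ_eq_sum_range (fun i => ∑ j ∈ range m, (b i - b j) ^ 2) m]
    refine sum_congr rfl fun i _ => ?_
    rw [← Fin.sum_univ_eq_sum_range (fun j => (b (i : ℕ) - b j) ^ 2) m]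
    refine sum_congr rfl fun j _ => ?_
    rw [hbi, hbi]
  rw [hstep, hfin, double_tri]
  have hmb : ∑ j ∈ range m, ∑ i ∈ range j, (b j - b i) ^ 2
      ≤ ((m / 2 * ((m + 1) / 2) : ℕ) : ℝ) * L ^ 2 := by
    refine mono_bound m L hL b ?_ ?_ ?_
    · intro i hi; rw [hbdef]; simp only [hi, dif_pos]; exact (hmem _).1
    · intro i hi; rw [hbdef]; simp only [hi, dif_pos]; exact (hmem _).2
    · intro i j hij hj
      have hi : i < m := lt_of_le_of_lt hij hj
      simp only [hbdef, hi, hj, dif_pos]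
      exact hmono (show (⟨i, hi⟩ : Fin m) ≤ ⟨j, hj⟩ from hij)
  linarith

private lemma finset_coord_bound {α : Type*} (Y : Finset α) (f : α → ℝ) (L : ℝ)
    (hL : 0 ≤ L) (hmem : ∀ x ∈ Y, f x ∈ Set.Icc 0 L) :
    ∑ p ∈ Y, ∑ q ∈ Y, (f p - f q) ^ 2
      ≤ 2 * ((Y.card / 2 * ((Y.card + 1) / 2) : ℕ) : ℝ) * L ^ 2 := by
  classical
  set m := Y.card with hm
  let e : Fin m ≃ {x // x ∈ Y} := Y.equivFin.symm
  have key : ∀ G : α → ℝ, ∑ p ∈ Y, G p = ∑ i : Fin m, G ((e i) : α) := by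
    intro G
    rw [← Finset.sum_coe_sort Y G]
    exact (Equiv.sum_comp e (fun p : {x // x ∈ Y} => G (p : α))).symm
  have h1 : ∑ p ∈ Y, ∑ q ∈ Y, (f p - f q) ^ 2
      = ∑ i : Fin m, ∑ j : Fin m, (f ((e i) : α) - f ((e j) : α)) ^ 2 := by
    rw [key (fun p => ∑ q ∈ Y, (f p - f q) ^ 2)]
    exact sum_congr rfl fun i _ => key (fun q => (f ((e i) : α) - f q) ^ 2)
  rw [h1]
  exact pair_sum_bound m L hL (fun i => f ((e i) : α)) (fun i => hmem _ (e i).2)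

/-- Let `δ, γ > 0`, let `k₁, k₂ ≥ 0`, and let `X ⊆ [0,δ]^{k₁} × [0,γ]^{k₂} ⊂ ℝ^{k₁+k₂}` be a
finite set with `|X| ≥ m` for some `m ≥ 2`. Then some two distinct points `p, q ∈ X` satisfy
`|p-q|² ≤ (⌊m/2⌋·⌈m/2⌉ / C(m,2))·(δ²k₁ + γ²k₂)`. -/
theorem stmt_10 (k₁ k₂ m : ℕ) (hm : 2 ≤ m) (δ γ : ℝ) (hδ : 0 < δ) (hγ : 0 < γ)
    (X : Finset (EuclideanSpace ℝ (Fin (k₁ + k₂)))) (hcard : m ≤ X.card)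
    (hbox : ∀ x ∈ X, ∀ i : Fin (k₁ + k₂),
      ((i : ℕ) < k₁ → x i ∈ Set.Icc 0 δ) ∧ (k₁ ≤ (i : ℕ) → x i ∈ Set.Icc 0 γ)) :
    ∃ p ∈ X, ∃ q ∈ X, p ≠ q ∧
      dist p q ^ 2 ≤
        ((m / 2 * ((m + 1) / 2) : ℕ) : ℝ) / (m.choose 2 : ℝ) * (δ ^ 2 * k₁ + γ ^ 2 * k₂) := by
  classical
  obtain ⟨Y, hYX, hYcard⟩ := Finset.exists_subset_card_eq hcard
  set K : ℝ := ((m / 2 * ((m + 1) / 2) : ℕ) : ℝ) with hK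
  set T : ℝ := δ ^ 2 * k₁ + γ ^ 2 * k₂ with hTdef
  set L : ℕ → ℝ := fun i => if i < k₁ then δ else γ with hLdef
  have hLpos : ∀ i, 0 ≤ L i := by
    intro i; rw [hLdef]; dsimp only; split <;> linarith
  have hKpos : 0 ≤ K := by positivity
  -- per coordinate bound
  have coord : ∀ i : Fin (k₁ + k₂),
      ∑ p ∈ Y, ∑ q ∈ Y, (p i - q i) ^ 2 ≤ 2 * K * (L (i : ℕ)) ^ 2 := by
    intro i
    have := finset_coord_bound Y (fun x => x i) (L (i : ℕ)) (hLpos _) ?_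
    · rw [hYcard] at this; exact this
    · intro x hx
      rcases hbox x (hYX hx) i with ⟨ha, hb⟩
      rw [hLdef]; dsimp only
      rcases lt_or_ge (i : ℕ) k₁ with h | h
      · simp only [h, if_pos]; exact ha h
      · simp only [not_lt.mpr h, if_neg, if_false]
        simpa using hb h
  -- distance formula
  have hdist : ∀ p q : EuclideanSpace ℝ (Fin (k₁ + k₂)),
      dist p q ^ 2 = ∑ i, (p i - q i) ^ 2 := by
    intro p q
    rw [EuclideanSpace.dist_eq, Real.sq_sqrt (by positivity)]
    exact sum_congr rfl fun i _ => by rw [Real.dist_eq, sq_abs]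
  -- sum of L² over coordinates
  have hLsum : ∑ i : Fin (k₁ + k₂), (L (i : ℕ)) ^ 2 = T := by
    rw [Fin.sum_univ_eq_sum_range (fun i => (L i) ^ 2) (k₁ + k₂)]
    rw [range_eq_Ico, ← Finset.sum_Ico_consecutive _ (Nat.zero_le k₁) (Nat.le_add_right k₁ k₂)]
    have e1 : ∑ i ∈ Finset.Ico 0 k₁, (L i) ^ 2 = (k₁ : ℝ) * δ ^ 2 := by
      have hterm : ∀ i ∈ Finset.Ico 0 k₁, (L i) ^ 2 = δ ^ 2 := by
        intro i hi; rw [hLdef]; dsimp only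
        rw [if_pos (Finset.mem_Ico.mp hi).2]
      rw [Finset.sum_congr rfl hterm, Finset.sum_const, Nat.card_Ico,
        nsmul_eq_mul, Nat.sub_zero]
    have e2 : ∑ i ∈ Finset.Ico k₁ (k₁ + k₂), (L i) ^ 2 = (k₂ : ℝ) * γ ^ 2 := by
      have hterm : ∀ i ∈ Finset.Ico k₁ (k₁ + k₂), (L i) ^ 2 = γ ^ 2 := by
        intro i hi; rw [hLdef]; dsimp only
        rw [if_neg (not_lt.mpr (Finset.mem_Ico.mp hi).1)]
      rw [Finset.sum_congr rfl hterm, Finset.sum_const, Nat.card_Ico, nsmul_eq_mul,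
        Nat.add_sub_cancel_left]
    rw [e1, e2, hTdef]; ring
  -- total bound over ordered pairs
  have total : ∑ p ∈ Y, ∑ q ∈ Y, dist p q ^ 2 ≤ 2 * K * T := by
    have swap : ∑ p ∈ Y, ∑ q ∈ Y, dist p q ^ 2
        = ∑ i : Fin (k₁ + k₂), ∑ p ∈ Y, ∑ q ∈ Y, (p i - q i) ^ 2 := by
      calc ∑ p ∈ Y, ∑ q ∈ Y, dist p q ^ 2
          = ∑ p ∈ Y, ∑ q ∈ Y, ∑ i, (p i - q i) ^ 2 :=
            sum_congr rfl fun p _ => sum_congr rfl fun q _ => hdist p q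
        _ = ∑ p ∈ Y, ∑ i, ∑ q ∈ Y, (p i - q i) ^ 2 :=
            sum_congr rfl fun p _ => Finset.sum_comm
        _ = ∑ i, ∑ p ∈ Y, ∑ q ∈ Y, (p i - q i) ^ 2 := Finset.sum_comm
    rw [swap]
    calc ∑ i : Fin (k₁ + k₂), ∑ p ∈ Y, ∑ q ∈ Y, (p i - q i) ^ 2
        ≤ ∑ i : Fin (k₁ + k₂), 2 * K * (L (i : ℕ)) ^ 2 := sum_le_sum fun i _ => coord i
      _ = 2 * K * T := by rw [← Finset.mul_sum, hLsum]
  -- move to off-diagonal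
  have hoff : ∑ x ∈ Y.offDiag, dist x.1 x.2 ^ 2 = ∑ p ∈ Y, ∑ q ∈ Y, dist p q ^ 2 := by
    rw [← Finset.sum_product']
    rw [← Finset.diag_union_offDiag Y, Finset.sum_union (Finset.disjoint_diag_offDiag Y)]
    have hdiag : ∑ x ∈ Y.diag, dist x.1 x.2 ^ 2 = 0 := by
      refine Finset.sum_eq_zero fun x hx => ?_
      obtain ⟨h1, h2⟩ := Finset.mem_diag.mp hx
      rw [h2]; simp
    rw [hdiag, zero_add]
  -- cardinality facts
  have hCpos : (0 : ℝ) < (m.choose 2 : ℝ) := by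
    exact_mod_cast Nat.choose_pos hm
  have hcard2 : (Y.offDiag.card : ℝ) = 2 * (m.choose 2 : ℝ) := by
    have h1 : Y.offDiag.card = m * m - m := by rw [Finset.offDiag_card, hYcard]
    have h2 : m * m - m = 2 * m.choose 2 := by
      obtain ⟨m', rfl⟩ : ∃ m', m = m' + 1 := ⟨m - 1, by omega⟩
      rw [Nat.choose_two_right]
      simp only [Nat.add_sub_cancel]
      have hms : (m' + 1) * (m' + 1) = (m' + 1) * m' + (m' + 1) := Nat.mul_succ _ _
      obtain ⟨c, hc⟩ : Even ((m' + 1) * m') := by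
        rw [mul_comm]; exact Nat.even_mul_succ_self m'
      omega
    rw [h1, h2]; push_cast; ring
  have hTpos : 0 ≤ T := by positivity
  -- existence
  have hne : Y.offDiag.Nonempty := by
    obtain ⟨a, ha, b, hb, hab⟩ := Finset.one_lt_card.mp (by omega : 1 < Y.card)
    exact ⟨(a, b), Finset.mem_offDiag.mpr ⟨ha, hb, hab⟩⟩
  have hsum_le : ∑ x ∈ Y.offDiag, dist x.1 x.2 ^ 2
      ≤ ∑ _x ∈ Y.offDiag, K / (m.choose 2 : ℝ) * T := by
    rw [Finset.sum_const, nsmul_eq_mul, hcard2, hoff]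
    calc ∑ p ∈ Y, ∑ q ∈ Y, dist p q ^ 2 ≤ 2 * K * T := total
      _ = 2 * (m.choose 2 : ℝ) * (K / (m.choose 2 : ℝ) * T) := by
          field_simp
  obtain ⟨x, hx, hxle⟩ := Finset.exists_le_of_sum_le hne hsum_le
  obtain ⟨hx1, hx2, hx12⟩ := Finset.mem_offDiag.mp hx
  exact ⟨x.1, hYX hx1, x.2, hYX hx2, hx12, hxle⟩
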